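/- Every multihomogeneous weak polynomial identity f(x₁,x₂) in two variables for the pair (A₁, V) of multidegree (r,s) with r ≥ s > 0 is, modulo the ideal I generated by Γ₃, St₃, T₄, of the form Σ_{i=1}^{s} α_i x₁^{r-i} x₂^{s-i} [x₁,x₂]^i; moreover evaluating at (x, y) forces all α_i = 0, so f ∈ I. -/

import Mathlib

open FreeAlgebra

/-- The defining relation of the Weyl algebra: `y * x = x * y + 1`. -/
inductive WeylRel (F : Type) [Field F] :
    FreeAlgebra F (Fin 2) → FreeAlgebra F (Fin 2) → Prop
  | rel : WeylRel F (FreeAlgebra.ι F 1 * FreeAlgebra.ι F 0)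
      (FreeAlgebra.ι F 0 * FreeAlgebra.ι F 1 + 1)

/-- The Weyl algebra A₁ over `F`. -/
abbrev Weyl (F : Type) [Field F] := RingQuot (WeylRel F)

/-- The generator `x` of the Weyl algebra. -/
noncomputable def Wx (F : Type) [Field F] : Weyl F :=
  RingQuot.mkAlgHom F (WeylRel F) (FreeAlgebra.ι F 0)

/-- The generator `y` of the Weyl algebra. -/
noncomputable def Wy (F : Type) [Field F] : Weyl F :=
  RingQuot.mkAlgHom F (WeylRel F) (FreeAlgebra.ι F 1)

/-- `V = F`-span of `{x, y}` inside the Weyl algebra. -/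
noncomputable def WV (F : Type) [Field F] : Submodule F (Weyl F) :=
  Submodule.span F {Wx F, Wy F}

/-- Γ₃(x_i, x_j, x_k) = [[x_i, x_j], x_k] in the free algebra. -/
noncomputable def Gamma3 (F : Type) [Field F] (i j k : ℕ) : FreeAlgebra F ℕ :=
  (ι F i * ι F j - ι F j * ι F i) * ι F k - ι F k * (ι F i * ι F j - ι F j * ι F i)

/-- St₃(x_i, x_j, x_k) = x_i[x_j,x_k] - x_j[x_i,x_k] + x_k[x_i,x_j]. -/
noncomputable def St3 (F : Type) [Field F] (i j k : ℕ) : FreeAlgebra F ℕ :=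
  ι F i * (ι F j * ι F k - ι F k * ι F j) - ι F j * (ι F i * ι F k - ι F k * ι F i) +
    ι F k * (ι F i * ι F j - ι F j * ι F i)

/-- T₄(x_i, x_j, x_k, x_l) = [x_i,x_j][x_k,x_l] - [x_i,x_k][x_j,x_l] + [x_j,x_k][x_i,x_l]. -/
noncomputable def T4 (F : Type) [Field F] (i j k l : ℕ) : FreeAlgebra F ℕ :=
  (ι F i * ι F j - ι F j * ι F i) * (ι F k * ι F l - ι F l * ι F k) -
    (ι F i * ι F k - ι F k * ι F i) * (ι F j * ι F l - ι F l * ι F j) +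
    (ι F j * ι F k - ι F k * ι F j) * (ι F i * ι F l - ι F l * ι F i)

/-- The generators of the ideal `I`: all substitutions of variables into Γ₃, St₃, T₄. -/
def weakGen (F : Type) [Field F] : Set (FreeAlgebra F ℕ) :=
  {g | (∃ i j k, g = Gamma3 F i j k) ∨ (∃ i j k, g = St3 F i j k) ∨
      (∃ i j k l, g = T4 F i j k l)}

/-- The two-sided ideal `I` of the free algebra generated by all substitutions of
variables into Γ₃, St₃, T₄, realized as the span of `a * g * b`. -/
noncomputable def weakIdeal (F : Type) [Field F] : Submodule F (FreeAlgebra F ℕ) :=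
  Submodule.span F {x | ∃ (a : FreeAlgebra F ℕ) (g : FreeAlgebra F ℕ) (b : FreeAlgebra F ℕ),
    g ∈ weakGen F ∧ x = a * g * b}

/-- The multihomogeneous component of multidegree `δ` (a multiset of variable indices). -/
noncomputable def mhComponent (F : Type) [Field F] (δ : Multiset ℕ) (f : FreeAlgebra F ℕ) :
    FreeAlgebra F ℕ :=
  letI e : FreeAlgebra F ℕ ≃ₐ[F] MonoidAlgebra F (FreeMonoid ℕ) :=
    FreeAlgebra.equivMonoidAlgebraFreeMonoid
  e.symm (MonoidAlgebra.ofCoeff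
    (Finsupp.filter (fun w : FreeMonoid ℕ => (↑(FreeMonoid.toList w) : Multiset ℕ) = δ)
    (e f).coeff))

namespace WeakAux
variable (F : Type) [Field F]

/-- commutator c = [x1,x2] -/
noncomputable def cc : FreeAlgebra F ℕ := ι F 0 * ι F 1 - ι F 1 * ι F 0

lemma gen_mem_weakIdeal {g : FreeAlgebra F ℕ} (hg : g ∈ weakGen F) : g ∈ weakIdeal F :=
  Submodule.subset_span ⟨1, g, 1, hg, by simp⟩

lemma weakIdeal_mul_left (a : FreeAlgebra F ℕ) {x} (hx : x ∈ weakIdeal F) :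
    a * x ∈ weakIdeal F := by
  induction hx using Submodule.span_induction with
  | mem y h =>
    obtain ⟨a', g, b', hg, rfl⟩ := h
    exact Submodule.subset_span ⟨a * a', g, b', hg, by rw [mul_assoc, mul_assoc, mul_assoc]⟩
  | zero => simpa using (weakIdeal F).zero_mem
  | add y z _ _ hy hz => simpa [mul_add] using (weakIdeal F).add_mem hy hz
  | smul t y _ hy => simpa [mul_smul_comm] using (weakIdeal F).smul_mem t hy

lemma weakIdeal_mul_right {x} (hx : x ∈ weakIdeal F) (b : FreeAlgebra F ℕ) :
    x * b ∈ weakIdeal F := by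
  induction hx using Submodule.span_induction with
  | mem y h =>
    obtain ⟨a', g, b', hg, rfl⟩ := h
    exact Submodule.subset_span ⟨a', g, b' * b, hg, by rw [mul_assoc, mul_assoc]⟩
  | zero => simpa using (weakIdeal F).zero_mem
  | add y z _ _ hy hz => simpa [add_mul] using (weakIdeal F).add_mem hy hz
  | smul t y _ hy => simpa [smul_mul_assoc] using (weakIdeal F).smul_mem t hy

lemma cc_comm_iota (k : ℕ) : cc F * ι F k - ι F k * cc F ∈ weakIdeal F := by
  have : Gamma3 F 0 1 k ∈ weakIdeal F :=
    gen_mem_weakIdeal F (Or.inl ⟨0, 1, k, rfl⟩)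
  simpa [Gamma3, cc] using this

lemma cc_comm_mul {m n : FreeAlgebra F ℕ}
    (hm : cc F * m - m * cc F ∈ weakIdeal F) (hn : cc F * n - n * cc F ∈ weakIdeal F) :
    cc F * (m * n) - (m * n) * cc F ∈ weakIdeal F := by
  have h : cc F * (m * n) - (m * n) * cc F
      = (cc F * m - m * cc F) * n + m * (cc F * n - n * cc F) := by noncomm_ring
  rw [h]
  exact (weakIdeal F).add_mem (weakIdeal_mul_right F hm n) (weakIdeal_mul_left F m hn)

lemma cc_comm_pow_iota (k b : ℕ) : cc F * (ι F k) ^ b - (ι F k) ^ b * cc F ∈ weakIdeal F := by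
  induction b with
  | zero => simpa using (weakIdeal F).zero_mem
  | succ b ih =>
    rw [pow_succ]
    exact cc_comm_mul F ih (cc_comm_iota F k)

lemma cc_comm_pow_cc (j : ℕ) : cc F * (cc F) ^ j - (cc F) ^ j * cc F ∈ weakIdeal F := by
  have : cc F * (cc F) ^ j - (cc F) ^ j * cc F = 0 := by
    rw [← pow_succ', ← pow_succ, sub_self]
  rw [this]; exact (weakIdeal F).zero_mem

/-- Congruence modulo the weak ideal. -/
def IC (f g : FreeAlgebra F ℕ) : Prop := f - g ∈ weakIdeal F

lemma IC.of_eq {f g : FreeAlgebra F ℕ} (h : f = g) : IC F f g := by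
  simp [IC, h, (weakIdeal F).zero_mem]

lemma IC.refl (f : FreeAlgebra F ℕ) : IC F f f := IC.of_eq F rfl

lemma IC.trans {f g h : FreeAlgebra F ℕ} (h1 : IC F f g) (h2 : IC F g h) : IC F f h := by
  have := (weakIdeal F).add_mem h1 h2
  simpa [IC] using this

lemma IC.add {f g f' g' : FreeAlgebra F ℕ} (h1 : IC F f g) (h2 : IC F f' g') :
    IC F (f + f') (g + g') := by
  have := (weakIdeal F).add_mem h1 h2
  simpa [IC, sub_add_sub_comm] using this

lemma IC.sub {f g f' g' : FreeAlgebra F ℕ} (h1 : IC F f g) (h2 : IC F f' g') :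
    IC F (f - f') (g - g') := by
  have := (weakIdeal F).sub_mem h1 h2
  simpa [IC, sub_sub_sub_comm] using this

lemma IC.smul (t : F) {f g : FreeAlgebra F ℕ} (h : IC F f g) : IC F (t • f) (t • g) := by
  have := (weakIdeal F).smul_mem t h
  simpa [IC, smul_sub] using this

lemma IC.mul_left (a : FreeAlgebra F ℕ) {f g : FreeAlgebra F ℕ} (h : IC F f g) :
    IC F (a * f) (a * g) := by
  have := weakIdeal_mul_left F a h
  simpa [IC, mul_sub] using this

lemma IC.mul_right {f g : FreeAlgebra F ℕ} (h : IC F f g) (b : FreeAlgebra F ℕ) :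
    IC F (f * b) (g * b) := by
  have := weakIdeal_mul_right F h b
  simpa [IC, sub_mul] using this

lemma IC.mem {f g : FreeAlgebra F ℕ} (h : IC F f g) (hg : g ∈ weakIdeal F) :
    f ∈ weakIdeal F := by
  have := (weakIdeal F).add_mem h hg
  simpa using this

lemma cc_comm_pow1 (b : ℕ) : IC F (cc F * (ι F 1) ^ b) ((ι F 1) ^ b * cc F) :=
  cc_comm_pow_iota F 1 b

/-- Straightening: `x₂ x₁^a ≡ x₁^a x₂ - a x₁^(a-1) c`. -/
lemma comm1 (a : ℕ) :
    IC F (ι F 1 * (ι F 0) ^ a)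
      ((ι F 0) ^ a * ι F 1 - ((a : ℕ) : F) • ((ι F 0) ^ (a - 1) * cc F)) := by
  induction a with
  | zero => exact IC.of_eq F (by simp)
  | succ a ih =>
    rcases Nat.eq_zero_or_pos a with rfl | ha
    · refine IC.of_eq F ?_
      simp only [zero_add, pow_one, Nat.cast_one, one_smul, Nat.sub_self, pow_zero, one_mul, cc]
      noncomm_ring
    · -- y * x^(a+1) = (y * x^a) * x
      have e1 : ι F 1 * (ι F 0) ^ (a + 1) = (ι F 1 * (ι F 0) ^ a) * ι F 0 := by
        rw [pow_succ, mul_assoc]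
      have s1 : IC F ((ι F 1 * (ι F 0) ^ a) * ι F 0)
          (((ι F 0) ^ a * ι F 1 - ((a : ℕ) : F) • ((ι F 0) ^ (a - 1) * cc F)) * ι F 0) :=
        IC.mul_right F ih _
      -- expand the product
      have e2 : (((ι F 0) ^ a * ι F 1 - ((a : ℕ) : F) • ((ι F 0) ^ (a - 1) * cc F)) * ι F 0)
          = (ι F 0) ^ a * (ι F 1 * ι F 0)
            - ((a : ℕ) : F) • ((ι F 0) ^ (a - 1) * (cc F * ι F 0)) := by
        rw [sub_mul, smul_mul_assoc, mul_assoc, mul_assoc]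
      -- y x = x y - c exactly
      have e3 : (ι F 0 : FreeAlgebra F ℕ) ^ a * (ι F 1 * ι F 0)
          = (ι F 0) ^ (a + 1) * ι F 1 - (ι F 0) ^ a * cc F := by
        rw [pow_succ, cc]; noncomm_ring
      -- move c past x
      have s2 : IC F ((ι F 0) ^ (a - 1) * (cc F * ι F 0)) ((ι F 0) ^ a * cc F) := by
        refine IC.trans F (IC.mul_left F _ (cc_comm_iota F 0)) (IC.of_eq F ?_)
        rw [← mul_assoc, ← pow_succ, Nat.sub_add_cancel ha]
      refine IC.trans F (IC.of_eq F e1) (IC.trans F s1 (IC.trans F (IC.of_eq F e2) ?_))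
      rw [e3]
      have s3 : IC F
          ((ι F 0) ^ (a+1) * ι F 1 - (ι F 0) ^ a * cc F
            - ((a : ℕ) : F) • ((ι F 0) ^ (a - 1) * (cc F * ι F 0)))
          ((ι F 0) ^ (a+1) * ι F 1 - (ι F 0) ^ a * cc F
            - ((a : ℕ) : F) • ((ι F 0) ^ a * cc F)) :=
        IC.sub F (IC.refl F _) (IC.smul F _ s2)
      refine IC.trans F s3 (IC.of_eq F ?_)
      rw [Nat.add_sub_cancel]
      push_cast
      rw [add_smul, one_smul]
      abel

/-- Normal-form monomials x₁^a x₂^b c^j. -/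
noncomputable def Nel (a b j : ℕ) : FreeAlgebra F ℕ :=
  (ι F 0) ^ a * (ι F 1) ^ b * (cc F) ^ j

lemma key0 (A B j : ℕ) : ι F 0 * Nel F A B j = Nel F (A + 1) B j := by
  rw [Nel, Nel, pow_succ']
  noncomm_ring

lemma key1 (A B j : ℕ) :
    IC F (ι F 1 * Nel F A B j)
      (Nel F A (B + 1) j - ((A : ℕ) : F) • Nel F (A - 1) B (j + 1)) := by
  have e1 : ι F 1 * Nel F A B j = (ι F 1 * (ι F 0) ^ A) * ((ι F 1) ^ B * (cc F) ^ j) := by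
    rw [Nel]; noncomm_ring
  have s1 := IC.mul_right F (comm1 F A) ((ι F 1) ^ B * (cc F) ^ j)
  have e2 : ((ι F 0) ^ A * ι F 1 - ((A : ℕ) : F) • ((ι F 0) ^ (A - 1) * cc F))
        * ((ι F 1) ^ B * (cc F) ^ j)
      = Nel F A (B + 1) j
        - ((A : ℕ) : F) • ((ι F 0) ^ (A - 1) * (cc F * (ι F 1) ^ B * (cc F) ^ j)) := by
    rw [Nel, pow_succ']
    noncomm_ring
  have s2 : IC F ((ι F 0) ^ (A - 1) * (cc F * (ι F 1) ^ B * (cc F) ^ j))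
      (Nel F (A - 1) B (j + 1)) := by
    refine IC.trans F (IC.mul_left F _ (IC.mul_right F (cc_comm_pow1 F B) _)) (IC.of_eq F ?_)
    rw [Nel, pow_succ']
    noncomm_ring
  refine IC.trans F (IC.of_eq F e1) (IC.trans F s1 (IC.trans F (IC.of_eq F e2) ?_))
  exact IC.sub F (IC.refl F _) (IC.smul F _ s2)

/-- The submodule of elements that are, modulo I, combinations of normal monomials of
multidegree (a,b). -/
noncomputable def Tsub (a b : ℕ) : Submodule F (FreeAlgebra F ℕ) :=
  weakIdeal F ⊔ Submodule.span F {m | ∃ j, j ≤ a ∧ j ≤ b ∧ m = Nel F (a - j) (b - j) j}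

lemma weakIdeal_le_Tsub (a b : ℕ) : weakIdeal F ≤ Tsub F a b := le_sup_left

lemma Nel_mem_Tsub {a b j : ℕ} (hja : j ≤ a) (hjb : j ≤ b) :
    Nel F (a - j) (b - j) j ∈ Tsub F a b :=
  (le_sup_right : _ ≤ Tsub F a b) (Submodule.subset_span ⟨j, hja, hjb, rfl⟩)

lemma IC.mem_Tsub {a b : ℕ} {f g : FreeAlgebra F ℕ} (h : IC F f g) (hg : g ∈ Tsub F a b) :
    f ∈ Tsub F a b := by
  have : f = (f - g) + g := by abel
  rw [this]
  exact (Tsub F a b).add_mem (weakIdeal_le_Tsub F a b h) hg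

lemma mul0_Tsub {a b : ℕ} {x : FreeAlgebra F ℕ} (hx : x ∈ Tsub F a b) :
    ι F 0 * x ∈ Tsub F (a + 1) b := by
  rw [Tsub, Submodule.mem_sup] at hx
  obtain ⟨p, hp, q, hq, rfl⟩ := hx
  rw [mul_add]
  refine (Tsub F (a+1) b).add_mem (weakIdeal_le_Tsub F _ _ (weakIdeal_mul_left F _ hp)) ?_
  induction hq using Submodule.span_induction with
  | mem m hm =>
    obtain ⟨j, hja, hjb, rfl⟩ := hm
    rw [key0]
    have : a - j + 1 = (a + 1) - j := by omega
    rw [this]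
    exact Nel_mem_Tsub F (by omega) (by omega)
  | zero => simpa using (Tsub F (a+1) b).zero_mem
  | add y z _ _ hy hz => simpa [mul_add] using (Tsub F (a+1) b).add_mem hy hz
  | smul t y _ hy => simpa [mul_smul_comm] using (Tsub F (a+1) b).smul_mem t hy

lemma mul1_Tsub {a b : ℕ} {x : FreeAlgebra F ℕ} (hx : x ∈ Tsub F a b) :
    ι F 1 * x ∈ Tsub F a (b + 1) := by
  rw [Tsub, Submodule.mem_sup] at hx
  obtain ⟨p, hp, q, hq, rfl⟩ := hx
  rw [mul_add]
  refine (Tsub F a (b+1)).add_mem (weakIdeal_le_Tsub F _ _ (weakIdeal_mul_left F _ hp)) ?_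
  induction hq using Submodule.span_induction with
  | mem m hm =>
    obtain ⟨j, hja, hjb, rfl⟩ := hm
    refine IC.mem_Tsub F (key1 F (a - j) (b - j) j) ?_
    refine (Tsub F a (b+1)).sub_mem ?_ ?_
    · have : b - j + 1 = (b + 1) - j := by omega
      rw [this]
      exact Nel_mem_Tsub F (by omega) (by omega)
    · rcases Nat.eq_zero_or_pos (a - j) with h0 | h0
      · rw [h0]
        simpa using (Tsub F a (b+1)).zero_mem
      · refine (Tsub F a (b+1)).smul_mem _ ?_
        have h1 : a - j - 1 = a - (j + 1) := by omega
        have h2 : b - j = (b + 1) - (j + 1) := by omega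
        rw [h1, h2]
        exact Nel_mem_Tsub F (by omega) (by omega)
  | zero => simpa using (Tsub F a (b+1)).zero_mem
  | add y z _ _ hy hz => simpa [mul_add] using (Tsub F a (b+1)).add_mem hy hz
  | smul t y _ hy => simpa [mul_smul_comm] using (Tsub F a (b+1)).smul_mem t hy

lemma word_mem (l : List ℕ) (hl : ∀ x ∈ l, x = 0 ∨ x = 1) :
    (FreeMonoid.lift (ι F)) (FreeMonoid.ofList l) ∈ Tsub F (l.count 0) (l.count 1) := by
  induction l with
  | nil =>
    have h1 : (FreeMonoid.lift (ι F)) (FreeMonoid.ofList ([] : List ℕ)) = Nel F 0 0 0 := by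
      simp [Nel]
    rw [h1]
    exact Nel_mem_Tsub F (le_refl 0) (le_refl 0)
  | cons x t ih =>
    have hx := hl x List.mem_cons_self
    have ht : ∀ y ∈ t, y = 0 ∨ y = 1 := fun y hy => hl y (List.mem_cons_of_mem x hy)
    have hsplit : (FreeMonoid.lift (ι F)) (FreeMonoid.ofList (x :: t))
        = ι F x * (FreeMonoid.lift (ι F)) (FreeMonoid.ofList t) := by
      have : FreeMonoid.ofList (x :: t) = FreeMonoid.of x * FreeMonoid.ofList t := rfl
      rw [this, map_mul, FreeMonoid.lift_eval_of]
    rw [hsplit]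
    rcases hx with rfl | rfl
    · have hc0 : (0 :: t).count 0 = t.count 0 + 1 := by simp
      have hc1 : (0 :: t).count 1 = t.count 1 := by simp
      rw [hc0, hc1]
      exact mul0_Tsub F (ih ht)
    · have hc0 : (1 :: t).count 0 = t.count 0 := by simp
      have hc1 : (1 :: t).count 1 = t.count 1 + 1 := by simp
      rw [hc0, hc1]
      exact mul1_Tsub F (ih ht)

lemma symm_single_eq (w : FreeMonoid ℕ) :
    (equivMonoidAlgebraFreeMonoid (R := F) (X := ℕ)).symm (MonoidAlgebra.single w (1 : F))
      = FreeMonoid.lift (ι F) w := by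
  show (MonoidAlgebra.lift F (FreeAlgebra F ℕ) (FreeMonoid ℕ)) (FreeMonoid.lift (ι F))
      (MonoidAlgebra.single w (1 : F)) = _
  simp

lemma symm_mem (g : MonoidAlgebra F (FreeMonoid ℕ)) (P : Submodule F (FreeAlgebra F ℕ))
    (h : ∀ w ∈ g.coeff.support, FreeMonoid.lift (ι F) w ∈ P) :
    (equivMonoidAlgebraFreeMonoid (R := F) (X := ℕ)).symm g ∈ P := by
  have hg : g = g.coeff.sum (fun w c => MonoidAlgebra.single w c) :=
    (MonoidAlgebra.sum_coeff_single g).symm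
  rw [hg, Finsupp.sum, map_sum]
  refine P.sum_mem fun w hw => ?_
  have h1 : (equivMonoidAlgebraFreeMonoid (R := F) (X := ℕ)).symm (MonoidAlgebra.single w (g.coeff w))
      = g.coeff w • (equivMonoidAlgebraFreeMonoid (R := F) (X := ℕ)).symm
          (MonoidAlgebra.single w (1 : F)) := by
    rw [← map_smul]
    congr 1
    rw [MonoidAlgebra.smul_single, smul_eq_mul, mul_one]
  rw [h1, symm_single_eq]
  exact Submodule.smul_mem P _ (h w hw)

/-- Any multihomogeneous element of multidegree (r,s) lies in `Tsub r s`. -/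
lemma mh_mem_Tsub (r s : ℕ) (f : FreeAlgebra F ℕ)
    (hhom : mhComponent F (Multiset.replicate r 0 + Multiset.replicate s 1) f = f) :
    f ∈ Tsub F r s := by
  rw [← hhom, mhComponent]
  refine symm_mem F _ _ fun w hw => ?_
  rw [MonoidAlgebra.coeff_ofCoeff, Finsupp.support_filter, Finset.mem_filter] at hw
  have hwm : (↑(FreeMonoid.toList w) : Multiset ℕ)
      = Multiset.replicate r 0 + Multiset.replicate s 1 := hw.2
  have hmem : ∀ x ∈ FreeMonoid.toList w, x = 0 ∨ x = 1 := by
    intro x hx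
    have : x ∈ (↑(FreeMonoid.toList w) : Multiset ℕ) := by exact_mod_cast hx
    rw [hwm, Multiset.mem_add] at this
    rcases this with h | h
    · exact Or.inl (Multiset.eq_of_mem_replicate h)
    · exact Or.inr (Multiset.eq_of_mem_replicate h)
  have hc0 : (FreeMonoid.toList w).count 0 = r := by
    have := congrArg (Multiset.count 0) hwm
    simpa [Multiset.count_replicate] using this
  have hc1 : (FreeMonoid.toList w).count 1 = s := by
    have := congrArg (Multiset.count 1) hwm
    simpa [Multiset.count_replicate] using this
  have := word_mem F (FreeMonoid.toList w) hmem
  rw [hc0, hc1] at this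
  simpa using this

lemma st3_zero {R : Type*} [Ring R] {a b c : R}
    (h : a = b ∨ b = c ∨ a = c ∨ a = 0 ∨ b = 0 ∨ c = 0) :
    a * (b * c - c * b) - b * (a * c - c * a) + c * (a * b - b * a) = 0 := by
  rcases h with rfl | rfl | rfl | rfl | rfl | rfl <;> noncomm_ring

lemma t4_zero {R : Type*} [Ring R] {a b c d : R}
    (h : a = b ∨ a = c ∨ b = c ∨ a = 0 ∨ b = 0 ∨ c = 0 ∨ d = 0) :
    (a * b - b * a) * (c * d - d * c) - (a * c - c * a) * (b * d - d * b) +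
      (b * c - c * b) * (a * d - d * a) = 0 := by
  rcases h with rfl | rfl | rfl | rfl | rfl | rfl | rfl <;> noncomm_ring

/-- The evaluation x₁ ↦ x, x₂ ↦ y, other variables ↦ 0. -/
noncomputable def u0 : ℕ → Weyl F := fun n => if n = 0 then Wx F else if n = 1 then Wy F else 0

lemma u0_mem_WV (i : ℕ) : u0 F i ∈ WV F := by
  rw [u0]
  split_ifs
  · exact Submodule.subset_span (Set.mem_insert _ _)
  · exact Submodule.subset_span (Set.mem_insert_iff.mpr (Or.inr rfl))
  · exact (WV F).zero_mem

lemma weyl_rel : Wy F * Wx F = Wx F * Wy F + 1 := by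
  have h := RingQuot.mkAlgHom_rel F (WeylRel.rel (F := F))
  simpa [Wx, Wy, map_mul, map_add, map_one] using h

lemma comm_xy : Wx F * Wy F - Wy F * Wx F = algebraMap F (Weyl F) (-1) := by
  rw [weyl_rel F]
  simp

lemma u0_cases (i : ℕ) : u0 F i = Wx F ∨ u0 F i = Wy F ∨ u0 F i = 0 := by
  rw [u0]; split_ifs <;> simp

lemma comm_u0_scalar (i j : ℕ) :
    ∃ d : F, u0 F i * u0 F j - u0 F j * u0 F i = algebraMap F (Weyl F) d := by
  rcases u0_cases F i with hi | hi | hi <;> rcases u0_cases F j with hj | hj | hj <;>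
    rw [hi, hj]
  · exact ⟨0, by simp⟩
  · exact ⟨-1, comm_xy F⟩
  · exact ⟨0, by simp⟩
  · refine ⟨1, ?_⟩
    have := comm_xy F
    have h2 : Wy F * Wx F - Wx F * Wy F = -(algebraMap F (Weyl F) (-1)) := by
      rw [← comm_xy F]; abel
    rw [h2]; simp
  · exact ⟨0, by simp⟩
  · exact ⟨0, by simp⟩
  · exact ⟨0, by simp⟩
  · exact ⟨0, by simp⟩
  · exact ⟨0, by simp⟩

lemma lift_u0_gen {g : FreeAlgebra F ℕ} (hg : g ∈ weakGen F) :
    FreeAlgebra.lift F (u0 F) g = 0 := by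
  rcases hg with ⟨i, j, k, rfl⟩ | ⟨i, j, k, rfl⟩ | ⟨i, j, k, l, rfl⟩
  · rw [Gamma3]
    simp only [map_sub, map_mul, lift_ι_apply]
    obtain ⟨d, hd⟩ := comm_u0_scalar F i j
    rw [hd, Algebra.commutes, sub_self]
  · rw [St3]
    simp only [map_add, map_sub, map_mul, lift_ι_apply]
    refine st3_zero ?_
    rcases u0_cases F i with hi | hi | hi <;> rcases u0_cases F j with hj | hj | hj <;>
      rcases u0_cases F k with hk | hk | hk <;> rw [hi, hj, hk] <;> tauto
  · rw [T4]
    simp only [map_add, map_sub, map_mul, lift_ι_apply]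
    refine t4_zero ?_
    rcases u0_cases F i with hi | hi | hi <;> rcases u0_cases F j with hj | hj | hj <;>
      rcases u0_cases F k with hk | hk | hk <;> rw [hi, hj, hk] <;> tauto

lemma lift_u0_weakIdeal {x : FreeAlgebra F ℕ} (hx : x ∈ weakIdeal F) :
    FreeAlgebra.lift F (u0 F) x = 0 := by
  induction hx using Submodule.span_induction with
  | mem y h =>
    obtain ⟨a, g, b, hg, rfl⟩ := h
    rw [map_mul, map_mul, lift_u0_gen F hg, mul_zero, zero_mul]
  | zero => simp
  | add y z _ _ hy hz => rw [map_add, hy, hz, add_zero]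
  | smul t y _ hy => rw [map_smul, hy, smul_zero]

lemma lift_u0_Nel (a b j : ℕ) :
    FreeAlgebra.lift F (u0 F) (Nel F a b j)
      = ((-1 : F) ^ j) • (Wx F ^ a * Wy F ^ b) := by
  rw [Nel, cc]
  simp only [map_mul, map_pow, map_sub, lift_ι_apply]
  have h0 : u0 F 0 = Wx F := by rw [u0]; simp
  have h1 : u0 F 1 = Wy F := by rw [u0]; simp
  rw [h0, h1, comm_xy F, ← map_pow, ← Algebra.commutes, ← Algebra.smul_def]

/-- Representation of the Weyl algebra on F[u][t]: x acts by multiplication by t,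
y acts by u + d/dt. -/
noncomputable def opX : Module.End F (Polynomial (Polynomial F)) :=
  LinearMap.mulLeft F (Polynomial.X : Polynomial (Polynomial F))

noncomputable def opY : Module.End F (Polynomial (Polynomial F)) :=
  LinearMap.mulLeft F (Polynomial.C (Polynomial.X : Polynomial F)) +
    ((Polynomial.derivative :
        Polynomial (Polynomial F) →ₗ[Polynomial F] Polynomial (Polynomial F)).restrictScalars F)

lemma op_rel : opY F * opX F = opX F * opY F + 1 := by
  apply LinearMap.ext
  intro f
  show opY F (opX F f) = opX F (opY F f) + f
  simp only [opX, opY, LinearMap.mulLeft_apply, LinearMap.add_apply,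
    LinearMap.coe_restrictScalars, Polynomial.derivative_mul, Polynomial.derivative_X]
  ring

noncomputable def Phi : Weyl F →ₐ[F] Module.End F (Polynomial (Polynomial F)) :=
  RingQuot.liftAlgHom F ⟨FreeAlgebra.lift F (![opX F, opY F]), by
    intro x y h
    cases h
    simp only [map_mul, map_add, map_one, lift_ι_apply, Matrix.cons_val_zero,
      Matrix.cons_val_one, Matrix.head_cons]
    exact op_rel F⟩

lemma Phi_x : Phi F (Wx F) = opX F := by
  rw [Wx, Phi, RingQuot.liftAlgHom_mkAlgHom_apply]
  simp

lemma Phi_y : Phi F (Wy F) = opY F := by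
  rw [Wy, Phi, RingQuot.liftAlgHom_mkAlgHom_apply]
  simp

lemma opY_pow_one (b : ℕ) :
    (opY F ^ b) (1 : Polynomial (Polynomial F)) = Polynomial.C (Polynomial.X ^ b) := by
  induction b with
  | zero => simp
  | succ b ih =>
    rw [pow_succ', Module.End.mul_apply, ih]
    simp only [opY, LinearMap.add_apply, LinearMap.mulLeft_apply,
      LinearMap.coe_restrictScalars, Polynomial.derivative_C, add_zero, ← Polynomial.C_mul]
    rw [← pow_succ']

lemma Phi_monomial (a b : ℕ) :
    (Phi F (Wx F ^ a * Wy F ^ b)) (1 : Polynomial (Polynomial F))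
      = Polynomial.monomial a (Polynomial.X ^ b : Polynomial F) := by
  rw [map_mul, map_pow, map_pow, Phi_x, Phi_y, Module.End.mul_apply, opY_pow_one,
    opX, LinearMap.pow_mulLeft, LinearMap.mulLeft_apply, mul_comm,
    Polynomial.C_mul_X_pow_eq_monomial]

end WeakAux

/-- Every multihomogeneous weak polynomial identity in the two variables x₁, x₂
of multidegree (r, s) with r ≥ s > 0 is, modulo I, of the form
Σ α_i x₁^{r-i} x₂^{s-i} [x₁,x₂]^i, and in fact lies in I. -/
theorem weak_identity_two_variables (F : Type) [Field F] [Infinite F]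
    (r s : ℕ) (hs : 0 < s) (hrs : s ≤ r) (f : FreeAlgebra F ℕ)
    (hhom : mhComponent F (Multiset.replicate r 0 + Multiset.replicate s 1) f = f)
    (hid : ∀ u : ℕ → Weyl F, (∀ i, u i ∈ WV F) → FreeAlgebra.lift F u f = 0) :
    (∃ α : Fin s → F,
      f - ∑ i : Fin s, α i •
        (ι F 0 ^ (r - ((i : ℕ) + 1)) * ι F 1 ^ (s - ((i : ℕ) + 1)) *
          (ι F 0 * ι F 1 - ι F 1 * ι F 0) ^ ((i : ℕ) + 1)) ∈ weakIdeal F) ∧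
    f ∈ weakIdeal F := by
  classical
  obtain ⟨g, hg, n, hn, hfgn⟩ :
      ∃ g ∈ weakIdeal F, ∃ n ∈ Submodule.span F
        {m | ∃ j, j ≤ r ∧ j ≤ s ∧ m = WeakAux.Nel F (r - j) (s - j) j}, g + n = f := by
    have hf := WeakAux.mh_mem_Tsub F r s f hhom
    rw [WeakAux.Tsub, Submodule.mem_sup] at hf
    exact hf
  have hset : {m | ∃ j, j ≤ r ∧ j ≤ s ∧ m = WeakAux.Nel F (r - j) (s - j) j}
      = Set.range (fun j : Fin (s + 1) => WeakAux.Nel F (r - (j : ℕ)) (s - (j : ℕ)) (j : ℕ)) := by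
    ext m
    constructor
    · rintro ⟨j, hjr, hjs, rfl⟩
      exact ⟨⟨j, by omega⟩, rfl⟩
    · rintro ⟨j, rfl⟩
      have hj := Nat.lt_succ_iff.mp j.2
      exact ⟨(j : ℕ), by omega, by omega, rfl⟩
  rw [hset, Submodule.mem_span_range_iff_exists_fun] at hn
  obtain ⟨β, hβ⟩ := hn
  have h0 : FreeAlgebra.lift F (WeakAux.u0 F) f = 0 := hid _ (WeakAux.u0_mem_WV F)
  have hgz := WeakAux.lift_u0_weakIdeal F hg
  have hnz : FreeAlgebra.lift F (WeakAux.u0 F) n = 0 := by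
    have h := congrArg (FreeAlgebra.lift F (WeakAux.u0 F)) hfgn
    rw [map_add, hgz, zero_add, h0] at h
    exact h
  have hsum : ∑ j : Fin (s + 1), (β j * (-1 : F) ^ (j : ℕ)) •
      (Wx F ^ (r - (j : ℕ)) * Wy F ^ (s - (j : ℕ))) = 0 := by
    have h := congrArg (FreeAlgebra.lift F (WeakAux.u0 F)) hβ
    rw [map_sum] at h
    simp only [map_smul, WeakAux.lift_u0_Nel, smul_smul] at h
    exact h.trans hnz
  have hM : ∑ j : Fin (s + 1), (β j * (-1 : F) ^ (j : ℕ)) •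
      (Polynomial.monomial (r - (j : ℕ)) (Polynomial.X ^ (s - (j : ℕ)) : Polynomial F)) = 0 := by
    have h := congrArg (fun z => (WeakAux.Phi F z) (1 : Polynomial (Polynomial F))) hsum
    simpa only [map_sum, map_smul, LinearMap.coe_sum, Finset.sum_apply,
      LinearMap.smul_apply, WeakAux.Phi_monomial, map_zero, LinearMap.zero_apply] using h
  have hβ0 : ∀ j : Fin (s + 1), β j = 0 := by
    intro j0
    have hc := congrArg (fun p => Polynomial.coeff p (r - (j0 : ℕ))) hM
    simp only [Polynomial.finset_sum_coeff, Polynomial.coeff_smul, Polynomial.coeff_monomial,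
      Polynomial.coeff_zero] at hc
    rw [Finset.sum_eq_single j0] at hc
    · rw [if_pos rfl] at hc
      rcases smul_eq_zero.mp hc with h | h
      · rcases mul_eq_zero.mp h with h' | h'
        · exact h'
        · exact absurd h' (pow_ne_zero _ (by norm_num))
      · exact absurd h (pow_ne_zero _ Polynomial.X_ne_zero)
    · intro b _ hbne
      have hb := Nat.lt_succ_iff.mp b.2
      have hj0 := Nat.lt_succ_iff.mp j0.2
      rw [if_neg, smul_zero]
      intro hEq
      exact hbne (Fin.ext (by omega))
    · intro h
      exact absurd (Finset.mem_univ j0) h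
  have hn0 : n = 0 := by
    rw [← hβ]
    refine Finset.sum_eq_zero fun j _ => ?_
    rw [hβ0 j, zero_smul]
  have hfI : f ∈ weakIdeal F := by
    rw [← hfgn, hn0, add_zero]
    exact hg
  exact ⟨⟨fun _ => 0, by simpa using hfI⟩, hfI⟩
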